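/- Let Θ ⊆ ℝ^d be compact, X a metric space, ν a σ-finite measure on X, and q : Θ × X → ℝ a function such that (i) for every θ ∈ Θ, q(θ,·) is a probability density with respect to ν, (ii) q is C′-Lipschitz on (Θ × X, ‖·‖ + d_X) for some C′ ≥ 0, and (iii) log q is bounded. Define Post(x,π)(B) = (∫_B q(θ,x) π(dθ)) / (∫_Θ q(θ,x) π(dθ)) for x ∈ X, π ∈ P(Θ), and Borel B ⊆ Θ. Then the map (x,π) ↦ Post(x,π) from (X × P(Θ), d_X + W1) to (P(Θ), W1) is Lipschitz. -/

import Mathlib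

open MeasureTheory

/-- The Wasserstein-1 distance between two measures, via Kantorovich–Rubinstein duality. -/
noncomputable def W1 {T : Type*} [MeasurableSpace T] [PseudoMetricSpace T]
    (μ ν : Measure T) : ℝ :=
  sSup { r : ℝ | ∃ f : T → ℝ, LipschitzWith 1 f ∧
    r = |(∫ t, f t ∂μ) - ∫ t, f t ∂ν| }

/-- The Bayes posterior on the parameter space: the prior reweighted by the likelihood
`θ ↦ q θ x` and normalized. -/
noncomputable def bayesPost {T X : Type*} [MeasurableSpace T]
    (q : T → X → ℝ) (π : ProbabilityMeasure T) (x : X) : Measure T :=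
  (∫⁻ θ, ENNReal.ofReal (q θ x) ∂(π : Measure T))⁻¹ •
    (π : Measure T).withDensity fun θ => ENNReal.ofReal (q θ x)

lemma integrable_of_bound {T : Type*} [MeasurableSpace T] (μ : Measure T) [IsFiniteMeasure μ]
    {h : T → ℝ} (hm : AEStronglyMeasurable h μ) {M : ℝ} (hb : ∀ t, |h t| ≤ M) :
    Integrable h μ :=
  Integrable.mono' (integrable_const M) hm
    (Filter.Eventually.of_forall fun t => by simpa [Real.norm_eq_abs] using hb t)

lemma abs_integral_le_of_bound {T : Type*} [MeasurableSpace T] (μ : Measure T)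
    [IsProbabilityMeasure μ] (h : T → ℝ) (M : ℝ) (hb : ∀ t, |h t| ≤ M) :
    |∫ t, h t ∂μ| ≤ M := by
  have := norm_integral_le_of_norm_le_const (μ := μ) (f := h)
    (Filter.Eventually.of_forall fun t => by simpa [Real.norm_eq_abs] using hb t)
  simpa [Real.norm_eq_abs, measure_univ] using this

lemma bayes_integral {T : Type*} [MeasurableSpace T] (μ : Measure T) [IsProbabilityMeasure μ]
    (g : T → ℝ) (hgm : Measurable g) (hg0 : ∀ t, 0 ≤ g t) (hgi : Integrable g μ) (f : T → ℝ) :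
    ∫ t, f t ∂((∫⁻ t, ENNReal.ofReal (g t) ∂μ)⁻¹ • μ.withDensity fun t => ENNReal.ofReal (g t))
      = (∫ t, g t ∂μ)⁻¹ * ∫ t, f t * g t ∂μ := by
  rw [integral_smul_measure,
    ← ofReal_integral_eq_lintegral_ofReal hgi (Filter.Eventually.of_forall hg0)]
  have h1 : ∫ t, f t ∂(μ.withDensity fun t => ENNReal.ofReal (g t)) = ∫ t, f t * g t ∂μ := by
    have h2 : ∫ t, f t ∂(μ.withDensity fun t => ((g t).toNNReal : ENNReal))
        = ∫ t, (g t).toNNReal • f t ∂μ :=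
      integral_withDensity_eq_integral_smul hgm.real_toNNReal f
    have h3 : (fun t => ENNReal.ofReal (g t)) = fun t => ((g t).toNNReal : ENNReal) := rfl
    rw [h3, h2]
    congr 1
    ext t
    rw [NNReal.smul_def, Real.coe_toNNReal _ (hg0 t), smul_eq_mul]
    ring
  rw [h1, ENNReal.toReal_inv, ENNReal.toReal_ofReal (integral_nonneg hg0), smul_eq_mul]

set_option maxHeartbeats 1000000 in
/-- for a dominated model on a compact `Θ ⊆ ℝ^d` with Lipschitz conditional
density `q` and bounded `log q`, the posterior map `(x,π) ↦ Post(x,π)` is Lipschitz from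
`(X × P(Θ), d_X + W1)` to `(P(Θ), W1)`. -/
theorem posterior_map_lipschitz_in_wasserstein
    {d : ℕ} {X : Type*} [MetricSpace X] [MeasurableSpace X] [BorelSpace X]
    (Θ : Set (EuclideanSpace ℝ (Fin d))) (hΘc : IsCompact Θ)
    (ν : Measure X) [SigmaFinite ν]
    (q : ↥Θ → X → ℝ)
    -- (i) `q(θ,·)` is a probability density with respect to `ν`
    (hdens : ∀ θ : ↥Θ, ∫⁻ x, ENNReal.ofReal (q θ x) ∂ν = 1)
    -- (ii) `q` is `C'`-Lipschitz for the sum metric on `Θ × X`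
    (C' : ℝ) (hC' : 0 ≤ C')
    (hqLip : ∀ θ θ' : ↥Θ, ∀ x x' : X,
      |q θ x - q θ' x'| ≤ C' * (‖(θ : EuclideanSpace ℝ (Fin d)) - θ'‖ + dist x x'))
    -- (iii) `log q` is bounded
    (c₁ c₂ : ℝ) (hc₁ : 0 < c₁)
    (hqbd : ∀ θ x, c₁ ≤ q θ x ∧ q θ x ≤ c₂) :
    ∃ K : ℝ, 0 ≤ K ∧ ∀ (x x' : X) (π π' : ProbabilityMeasure ↥Θ),
      W1 (bayesPost q π x) (bayesPost q π' x') ≤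
        K * (dist x x' + W1 (π : Measure ↥Θ) (π' : Measure ↥Θ)) := by
  rcases isEmpty_or_nonempty X with hX | hX
  · exact ⟨0, le_refl 0, fun x => (IsEmpty.false x).elim⟩
  rcases isEmpty_or_nonempty (↥Θ) with hT | hT
  · refine ⟨0, le_refl 0, fun x x' π π' => ?_⟩
    have h1 : (π : Measure ↥Θ) Set.univ = 1 := measure_univ
    rw [Set.univ_eq_empty_iff.mpr hT, measure_empty] at h1
    exact absurd h1 (by simp)
  obtain ⟨θ₀⟩ := hT
  obtain ⟨x₀⟩ := hX
  obtain ⟨D, hD⟩ := Metric.isBounded_iff.mp hΘc.isBounded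
  have hc₂ : c₁ ≤ c₂ := le_trans (hqbd θ₀ x₀).1 (hqbd θ₀ x₀).2
  have hc₂0 : 0 ≤ c₂ := le_trans hc₁.le hc₂
  have hD0 : 0 ≤ D := le_trans dist_nonneg (hD θ₀.2 θ₀.2)
  have hdistD : ∀ a b : ↥Θ, dist a b ≤ D := fun a b => by
    rw [Subtype.dist_eq]; exact hD a.2 b.2
  have hg0 : ∀ (y : X) (t : ↥Θ), 0 ≤ q t y := fun y t => le_trans hc₁.le (hqbd t y).1
  have hgub : ∀ (y : X) (t : ↥Θ), |q t y| ≤ c₂ := fun y t => by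
    rw [abs_of_nonneg (hg0 y t)]; exact (hqbd t y).2
  have hgLip : ∀ (y : X) (a b : ↥Θ), |q a y - q b y| ≤ C' * dist a b := fun y a b => by
    have := hqLip a b y y
    simpa [Subtype.dist_eq, dist_eq_norm] using this
  have hgx : ∀ (y y' : X) (t : ↥Θ), |q t y - q t y'| ≤ C' * dist y y' := fun y y' t => by
    have := hqLip t t y y'
    simpa using this
  have hgMeas : ∀ y : X, Measurable fun t : ↥Θ => q t y := by
    intro y
    have hlip : LipschitzWith C'.toNNReal (fun t : ↥Θ => q t y) := by
      apply LipschitzWith.of_dist_le_mul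
      intro a b
      rw [Real.dist_eq, Real.coe_toNNReal _ hC']
      exact hgLip y a b
    exact hlip.continuous.measurable
  have hinv_nn : (0:ℝ) ≤ c₁⁻¹ := inv_nonneg.mpr hc₁.le
  have hcoef_nn : (0:ℝ) ≤ D * c₂ / c₁ ^ 2 :=
    div_nonneg (mul_nonneg hD0 hc₂0) (sq_nonneg c₁)
  refine ⟨c₁⁻¹ * (D * C' + (c₂ + D * C')) + (D * c₂ / c₁ ^ 2) * (C' + (C' + 1)), ?_, ?_⟩
  · have h1 : 0 ≤ D * C' + (c₂ + D * C') := by positivity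
    have h2 : 0 ≤ C' + (C' + 1) := by positivity
    exact add_nonneg (mul_nonneg hinv_nn h1) (mul_nonneg hcoef_nn h2)
  intro x x' π π'
  set μ : Measure ↥Θ := (π : Measure ↥Θ) with hμ
  set μ' : Measure ↥Θ := (π' : Measure ↥Θ) with hμ'
  -- boundedness of the dual set for (π, π')
  have hBdd : BddAbove {r : ℝ | ∃ f : ↥Θ → ℝ, LipschitzWith 1 f ∧
      r = |(∫ t, f t ∂μ) - ∫ t, f t ∂μ'|} := by
    refine ⟨2 * D, ?_⟩
    rintro r ⟨f, hf, rfl⟩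
    have hfb : ∀ t, |f t - f θ₀| ≤ D := fun t => by
      have h1 : dist (f t) (f θ₀) ≤ 1 * dist t θ₀ := by exact_mod_cast hf.dist_le_mul t θ₀
      rw [Real.dist_eq, one_mul] at h1
      exact le_trans h1 (hdistD t θ₀)
    have hfbd : ∀ t, |f t| ≤ D + |f θ₀| := fun t => by
      have h1 := hfb t
      have h2 := abs_add_le (f t - f θ₀) (f θ₀)
      simpa using le_trans (by simpa using h2) (by linarith)
    have hint : ∀ σ : Measure ↥Θ, IsProbabilityMeasure σ → Integrable f σ := fun σ _ =>
      integrable_of_bound σ hf.continuous.measurable.aestronglyMeasurable hfbd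
    have e : ∀ σ : Measure ↥Θ, IsProbabilityMeasure σ →
        ∫ t, f t ∂σ = (∫ t, (f t - f θ₀) ∂σ) + f θ₀ := by
      intro σ hσ
      rw [integral_sub (hint σ hσ) (integrable_const _), integral_const]
      simp [measure_univ]
    rw [e μ (by infer_instance), e μ' (by infer_instance)]
    have b1 := abs_integral_le_of_bound μ (fun t => f t - f θ₀) D hfb
    have b2 := abs_integral_le_of_bound μ' (fun t => f t - f θ₀) D hfb
    rw [abs_le] at b1 b2
    rw [add_sub_add_right_eq_sub, abs_le]
    constructor <;> linarith [b1.1, b1.2, b2.1, b2.2]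
  have hW1nn : 0 ≤ W1 μ μ' := by
    apply le_csSup hBdd
    exact ⟨fun _ => 0, by simpa using (LipschitzWith.const (0:ℝ)).weaken zero_le_one, by simp⟩
  have hKey : ∀ (h : ↥Θ → ℝ) (L : ℝ), 0 < L → (∀ a b, |h a - h b| ≤ L * dist a b) →
      |(∫ t, h t ∂μ) - ∫ t, h t ∂μ'| ≤ L * W1 μ μ' := by
    intro h L hL hh
    have hLip : LipschitzWith 1 (fun t => L⁻¹ * h t) := by
      apply LipschitzWith.of_dist_le_mul
      intro a b
      rw [Real.dist_eq]
      have e1 : |L⁻¹ * h a - L⁻¹ * h b| = L⁻¹ * |h a - h b| := by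
        rw [← mul_sub, abs_mul, abs_of_pos (inv_pos.mpr hL)]
      rw [e1]
      calc L⁻¹ * |h a - h b| ≤ L⁻¹ * (L * dist a b) :=
            mul_le_mul_of_nonneg_left (hh a b) (inv_nonneg.mpr hL.le)
        _ = dist a b := by field_simp
        _ ≤ ↑(1:NNReal) * dist a b := by simp
    have hmem : |(∫ t, L⁻¹ * h t ∂μ) - ∫ t, L⁻¹ * h t ∂μ'| ∈
        {r : ℝ | ∃ f : ↥Θ → ℝ, LipschitzWith 1 f ∧
          r = |(∫ t, f t ∂μ) - ∫ t, f t ∂μ'|} := ⟨_, hLip, rfl⟩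
    have hle := le_csSup hBdd hmem
    rw [integral_const_mul, integral_const_mul, ← mul_sub, abs_mul,
      abs_of_pos (inv_pos.mpr hL)] at hle
    have := mul_le_mul_of_nonneg_left hle hL.le
    calc |(∫ t, h t ∂μ) - ∫ t, h t ∂μ'|
        = L * (L⁻¹ * |(∫ t, h t ∂μ) - ∫ t, h t ∂μ'|) := by field_simp
      _ ≤ L * W1 μ μ' := this
  -- notation
  set W := W1 μ μ' with hW
  set dx := dist x x' with hdx
  have hdx0 : 0 ≤ dx := dist_nonneg
  -- integrability facts
  have hintg : ∀ y : X, Integrable (fun t => q t y) μ ∧ Integrable (fun t => q t y) μ' :=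
    fun y => ⟨integrable_of_bound μ (hgMeas y).aestronglyMeasurable (hgub y),
      integrable_of_bound μ' (hgMeas y).aestronglyMeasurable (hgub y)⟩
  set Z : ℝ := ∫ t, q t x ∂μ with hZ
  set Z' : ℝ := ∫ t, q t x' ∂μ' with hZ'
  have hZlb : ∀ (y : X) (σ : Measure ↥Θ) (hσ : IsProbabilityMeasure σ),
      c₁ ≤ ∫ t, q t y ∂σ := by
    intro y σ hσ
    have h1 : ∫ t, (c₁:ℝ) ∂σ ≤ ∫ t, q t y ∂σ :=
      integral_mono (integrable_const _)
        (integrable_of_bound σ (hgMeas y).aestronglyMeasurable (hgub y)) (fun t => (hqbd t y).1)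
    simpa [measure_univ] using h1
  have hZ1 : c₁ ≤ Z := hZlb x μ (by infer_instance)
  have hZ1' : c₁ ≤ Z' := hZlb x' μ' (by infer_instance)
  have hZpos : 0 < Z := lt_of_lt_of_le hc₁ hZ1
  have hZpos' : 0 < Z' := lt_of_lt_of_le hc₁ hZ1'
  -- main bound for each 1-Lipschitz f
  rw [show W1 (bayesPost q π x) (bayesPost q π' x') = sSup {r : ℝ | ∃ f : ↥Θ → ℝ,
    LipschitzWith 1 f ∧ r = |(∫ t, f t ∂(bayesPost q π x)) - ∫ t, f t ∂(bayesPost q π' x')|}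
    from rfl]
  apply csSup_le
  · exact ⟨0, fun _ => 0, by simpa using (LipschitzWith.const (0:ℝ)).weaken zero_le_one, by simp⟩
  rintro r ⟨f, hf, rfl⟩
  have hfb : ∀ t, |f t - f θ₀| ≤ D := fun t => by
    have h1 : dist (f t) (f θ₀) ≤ 1 * dist t θ₀ := by exact_mod_cast hf.dist_le_mul t θ₀
    rw [Real.dist_eq, one_mul] at h1
    exact le_trans h1 (hdistD t θ₀)
  have hfLip : ∀ a b : ↥Θ, |f a - f b| ≤ dist a b := fun a b => by
    have h1 : dist (f a) (f b) ≤ 1 * dist a b := by exact_mod_cast hf.dist_le_mul a b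
    rw [Real.dist_eq, one_mul] at h1; exact h1
  have hfmeas : Measurable f := hf.continuous.measurable
  -- product integrability
  have hprodbd : ∀ (y : X) (t : ↥Θ), |(f t - f θ₀) * q t y| ≤ D * c₂ := fun y t => by
    rw [abs_mul]
    exact mul_le_mul (hfb t) (hgub y t) (abs_nonneg _) hD0
  have hprodint : ∀ (y : X) (σ : Measure ↥Θ), IsProbabilityMeasure σ →
      Integrable (fun t => (f t - f θ₀) * q t y) σ := fun y σ _ =>
    integrable_of_bound σ (((hfmeas.sub measurable_const).mul (hgMeas y)).aestronglyMeasurable)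
      (hprodbd y)
  -- compute the posterior integrals
  have hPost : ∀ (y : X) (ρ : ProbabilityMeasure ↥Θ),
      ∫ t, f t ∂(bayesPost q ρ y) = (∫ t, q t y ∂(ρ : Measure ↥Θ))⁻¹ *
        ((∫ t, (f t - f θ₀) * q t y ∂(ρ : Measure ↥Θ)) + f θ₀ * (∫ t, q t y ∂(ρ : Measure ↥Θ))) := by
    intro y ρ
    have h1 : ∫ t, f t ∂(bayesPost q ρ y) =
        (∫ t, q t y ∂(ρ : Measure ↥Θ))⁻¹ * ∫ t, f t * q t y ∂(ρ : Measure ↥Θ) :=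
      bayes_integral (ρ : Measure ↥Θ) (fun t => q t y) (hgMeas y) (hg0 y)
        (integrable_of_bound _ (hgMeas y).aestronglyMeasurable (hgub y)) f
    rw [h1]
    congr 1
    have e : (fun t => f t * q t y) = fun t => (f t - f θ₀) * q t y + f θ₀ * q t y := by
      ext t; ring
    rw [e, integral_add (hprodint y _ (by infer_instance))
      (((integrable_of_bound _ (hgMeas y).aestronglyMeasurable (hgub y))).const_mul _),
      integral_const_mul]
  set A : ℝ := ∫ t, (f t - f θ₀) * q t x ∂μ with hA
  set A' : ℝ := ∫ t, (f t - f θ₀) * q t x' ∂μ' with hA'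
  have hr : |(∫ t, f t ∂(bayesPost q π x)) - ∫ t, f t ∂(bayesPost q π' x')|
      = |Z⁻¹ * A - Z'⁻¹ * A'| := by
    rw [hPost x π, hPost x' π']
    rw [← hμ, ← hμ', ← hZ, ← hZ', ← hA, ← hA']
    congr 1
    linear_combination (f θ₀) * (mul_inv_cancel₀ hZpos.ne') - (f θ₀) * (mul_inv_cancel₀ hZpos'.ne')
  rw [hr]
  -- bound |A'|
  have hA'b : |A'| ≤ D * c₂ := abs_integral_le_of_bound μ' _ _ (hprodbd x')
  -- bound |A - A'|
  have hAA' : |A - A'| ≤ D * C' * dx + (c₂ + D * C') * W := by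
    set B : ℝ := ∫ t, (f t - f θ₀) * q t x' ∂μ with hB
    have h1 : |A - B| ≤ D * C' * dx := by
      have e : A - B = ∫ t, ((f t - f θ₀) * q t x - (f t - f θ₀) * q t x') ∂μ :=
        (integral_sub (hprodint x μ (by infer_instance)) (hprodint x' μ (by infer_instance))).symm
      rw [e]
      refine abs_integral_le_of_bound μ _ _ (fun t => ?_)
      have e2 : (f t - f θ₀) * q t x - (f t - f θ₀) * q t x' = (f t - f θ₀) * (q t x - q t x') := by
        ring
      rw [e2, abs_mul]
      calc |f t - f θ₀| * |q t x - q t x'| ≤ D * (C' * dx) :=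
            mul_le_mul (hfb t) (hgx x x' t) (abs_nonneg _) hD0
        _ = D * C' * dx := by ring
    have h2 : |B - A'| ≤ (c₂ + D * C') * W := by
      refine hKey (fun t => (f t - f θ₀) * q t x') (c₂ + D * C') (by nlinarith [mul_nonneg hD0 hC']) (fun a b => ?_)
      have e : (f a - f θ₀) * q a x' - (f b - f θ₀) * q b x'
          = (f a - f θ₀) * (q a x' - q b x') + q b x' * (f a - f b) := by ring
      rw [e]
      calc |(f a - f θ₀) * (q a x' - q b x') + q b x' * (f a - f b)|
          ≤ |(f a - f θ₀) * (q a x' - q b x')| + |q b x' * (f a - f b)| := abs_add_le _ _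
        _ ≤ D * (C' * dist a b) + c₂ * dist a b := by
            rw [abs_mul, abs_mul]
            exact add_le_add (mul_le_mul (hfb a) (hgLip x' a b) (abs_nonneg _) hD0)
              (mul_le_mul (hgub x' b) (hfLip a b) (abs_nonneg _) hc₂0)
        _ = (c₂ + D * C') * dist a b := by ring
    calc |A - A'| ≤ |A - B| + |B - A'| := abs_sub_le A B A'
      _ ≤ D * C' * dx + (c₂ + D * C') * W := add_le_add h1 h2
  -- bound |Z - Z'|
  have hZZ' : |Z - Z'| ≤ C' * dx + (C' + 1) * W := by
    set B : ℝ := ∫ t, q t x' ∂μ with hB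
    have h1 : |Z - B| ≤ C' * dx := by
      have e : Z - B = ∫ t, (q t x - q t x') ∂μ :=
        (integral_sub (hintg x).1 (hintg x').1).symm
      rw [e]
      exact abs_integral_le_of_bound μ _ _ (fun t => hgx x x' t)
    have h2 : |B - Z'| ≤ (C' + 1) * W := by
      refine hKey (fun t => q t x') (C' + 1) (by linarith) (fun a b => ?_)
      calc |q a x' - q b x'| ≤ C' * dist a b := hgLip x' a b
        _ ≤ (C' + 1) * dist a b := by nlinarith [dist_nonneg (x := a) (y := b)]
    calc |Z - Z'| ≤ |Z - B| + |B - Z'| := abs_sub_le Z B Z'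
      _ ≤ C' * dx + (C' + 1) * W := add_le_add h1 h2
  -- final algebra
  have key1 : |Z⁻¹ * A - Z'⁻¹ * A'| ≤ c₁⁻¹ * |A - A'| + (D * c₂ / c₁ ^ 2) * |Z - Z'| := by
    have e : Z⁻¹ * A - Z'⁻¹ * A' = Z⁻¹ * (A - A') + |A'| * 0 +
        (A' * (Z' - Z)) * (Z⁻¹ * Z'⁻¹) := by
      field_simp
      ring
    rw [e]
    have t1 : |Z⁻¹ * (A - A')| ≤ c₁⁻¹ * |A - A'| := by
      rw [abs_mul, abs_of_pos (inv_pos.mpr hZpos)]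
      exact mul_le_mul_of_nonneg_right (inv_anti₀ hc₁ hZ1) (abs_nonneg _)
    have t2 : |(A' * (Z' - Z)) * (Z⁻¹ * Z'⁻¹)| ≤ (D * c₂ / c₁ ^ 2) * |Z - Z'| := by
      rw [abs_mul, abs_mul, abs_mul, abs_of_pos (inv_pos.mpr hZpos),
        abs_of_pos (inv_pos.mpr hZpos'), abs_sub_comm Z' Z]
      have hZi : Z⁻¹ ≤ c₁⁻¹ := inv_anti₀ hc₁ hZ1
      have hZi' : Z'⁻¹ ≤ c₁⁻¹ := inv_anti₀ hc₁ hZ1'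
      calc |A'| * |Z - Z'| * (Z⁻¹ * Z'⁻¹)
          ≤ (D * c₂) * |Z - Z'| * (c₁⁻¹ * c₁⁻¹) := by
            refine mul_le_mul (mul_le_mul_of_nonneg_right hA'b (abs_nonneg _)) ?_ ?_ ?_
            · exact mul_le_mul hZi hZi' (inv_nonneg.mpr hZpos'.le) hinv_nn
            · exact mul_nonneg (inv_nonneg.mpr hZpos.le) (inv_nonneg.mpr hZpos'.le)
            · exact mul_nonneg (mul_nonneg hD0 hc₂0) (abs_nonneg _)
        _ = (D * c₂ / c₁ ^ 2) * |Z - Z'| := by ring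
    calc |Z⁻¹ * (A - A') + |A'| * 0 + (A' * (Z' - Z)) * (Z⁻¹ * Z'⁻¹)|
        ≤ |Z⁻¹ * (A - A') + |A'| * 0| + |(A' * (Z' - Z)) * (Z⁻¹ * Z'⁻¹)| := abs_add_le _ _
      _ = |Z⁻¹ * (A - A')| + |(A' * (Z' - Z)) * (Z⁻¹ * Z'⁻¹)| := by ring_nf
      _ ≤ c₁⁻¹ * |A - A'| + (D * c₂ / c₁ ^ 2) * |Z - Z'| := add_le_add t1 t2
  calc |Z⁻¹ * A - Z'⁻¹ * A'|
      ≤ c₁⁻¹ * |A - A'| + (D * c₂ / c₁ ^ 2) * |Z - Z'| := key1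
    _ ≤ c₁⁻¹ * (D * C' * dx + (c₂ + D * C') * W)
        + (D * c₂ / c₁ ^ 2) * (C' * dx + (C' + 1) * W) :=
          add_le_add (mul_le_mul_of_nonneg_left hAA' hinv_nn)
            (mul_le_mul_of_nonneg_left hZZ' hcoef_nn)
    _ ≤ (c₁⁻¹ * (D * C' + (c₂ + D * C')) + (D * c₂ / c₁ ^ 2) * (C' + (C' + 1))) * (dx + W) := by
        have h1 : D * C' * dx + (c₂ + D * C') * W ≤ (D * C' + (c₂ + D * C')) * (dx + W) := by
          nlinarith [mul_nonneg (mul_nonneg hD0 hC') hW1nn,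
            mul_nonneg (add_nonneg hc₂0 (mul_nonneg hD0 hC')) hdx0]
        have h2 : C' * dx + (C' + 1) * W ≤ (C' + (C' + 1)) * (dx + W) := by
          nlinarith [mul_nonneg hC' hW1nn, mul_nonneg (by linarith : (0:ℝ) ≤ C' + 1) hdx0]
        calc c₁⁻¹ * (D * C' * dx + (c₂ + D * C') * W)
            + (D * c₂ / c₁ ^ 2) * (C' * dx + (C' + 1) * W)
            ≤ c₁⁻¹ * ((D * C' + (c₂ + D * C')) * (dx + W))
              + (D * c₂ / c₁ ^ 2) * ((C' + (C' + 1)) * (dx + W)) :=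
              add_le_add (mul_le_mul_of_nonneg_left h1 hinv_nn)
                (mul_le_mul_of_nonneg_left h2 hcoef_nn)
          _ = (c₁⁻¹ * (D * C' + (c₂ + D * C')) + (D * c₂ / c₁ ^ 2) * (C' + (C' + 1))) * (dx + W) := by
              ring
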